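/- Let f : [0,1]^d → ℝ be twice differentiable with ‖∇²f‖_∞ ≤ 2L on a cube B with side length h and center c, and let θ = (θ₁,…,θ_d) be the coefficients of the L²-best affine approximation of f on B. If x₀ ∈ B is any point where f(x₀) equals its affine approximation value, then ‖∇f(x₀) − θ‖_∞ ≤ 4√3 · L h. -/

import Mathlib

open Set MeasureTheory

lemma icc1d_const (c h : ℝ) (hh : 0 ≤ h) : (∫ _ in Icc (c - h/2) (c + h/2), (1:ℝ)) = h := by
  rw [MeasureTheory.setIntegral_const, smul_eq_mul, mul_one, Real.volume_real_Icc,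
    show c + h/2 - (c - h/2) = h by ring, max_eq_left hh]

lemma icc1d_lin (c h : ℝ) (hh : 0 < h) :
    (∫ t in Icc (c - h/2) (c + h/2), (t - c)) = 0 := by
  have hab : c - h/2 ≤ c + h/2 := by linarith
  rw [MeasureTheory.integral_Icc_eq_integral_Ioc, ← intervalIntegral.integral_of_le hab]
  rw [intervalIntegral.integral_comp_sub_right (fun t => t) c, integral_id]
  ring

lemma icc1d_sq (c h : ℝ) (hh : 0 < h) :
    (∫ t in Icc (c - h/2) (c + h/2), (t - c)^2) = h^3/12 := by
  have hab : c - h/2 ≤ c + h/2 := by linarith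
  rw [MeasureTheory.integral_Icc_eq_integral_Ioc, ← intervalIntegral.integral_of_le hab]
  rw [intervalIntegral.integral_comp_sub_right (fun t => t^2) c, integral_pow]
  ring

lemma fubini_Icc {d : ℕ} (a b : Fin d → ℝ) (F : Fin d → ℝ → ℝ) :
    ∫ x in Icc a b, ∏ j, F j (x j) = ∏ j, ∫ t in Icc (a j) (b j), F j t := by
  rw [← integral_indicator measurableSet_Icc]
  have h1 : ∀ x : Fin d → ℝ, (Icc a b).indicator (fun y => ∏ j, F j (y j)) x
      = ∏ j, (Icc (a j) (b j)).indicator (F j) (x j) := by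
    intro x
    by_cases hx : x ∈ Icc a b
    · rw [indicator_of_mem hx]
      exact Finset.prod_congr rfl fun j _ =>
        (indicator_of_mem (mem_Icc.mpr ⟨hx.1 j, hx.2 j⟩) (F j)).symm
    · rw [indicator_of_notMem hx]
      have hex : ∃ j, x j ∉ Icc (a j) (b j) := by
        by_contra hall
        push_neg at hall
        exact hx ⟨fun j => (hall j).1, fun j => (hall j).2⟩
      obtain ⟨j, hj⟩ := hex
      exact (Finset.prod_eq_zero (Finset.mem_univ j) (indicator_of_notMem hj (F j))).symm
  simp_rw [h1]
  rw [MeasureTheory.integral_fintype_prod_volume_eq_prod]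
  exact Finset.prod_congr rfl fun j _ => integral_indicator measurableSet_Icc

theorem stmt_5 (d : ℕ) (hd : 1 ≤ d) (L h : ℝ) (hL : 0 < L) (hh : 0 < h)
    (c : Fin d → ℝ) (f : (Fin d → ℝ) → ℝ)
    (B : Set (Fin d → ℝ))
    (hB : B = Icc (fun j => c j - h / 2) (fun j => c j + h / 2))
    (hdiff : Differentiable ℝ f)
    (hsmooth : ∀ x₁ ∈ B, ∀ x₂ ∈ B,
      |f x₁ - f x₂ - fderiv ℝ f x₂ (x₁ - x₂)| ≤ L * ‖x₁ - x₂‖ ^ 2)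
    (θ₀ : ℝ) (θ : Fin d → ℝ)
    (hθ₀ : θ₀ = (1 / h ^ d) * ∫ x in B, f x)
    (hθ : ∀ i, θ i =
      (∫ x in B, (f x - θ₀) * (x i - c i)) / (∫ x in B, (x i - c i) ^ 2))
    (x₀ : Fin d → ℝ) (hx₀ : x₀ ∈ B)
    (heq : f x₀ = θ₀ + ∑ i, θ i * (x₀ i - c i)) :
    ∀ i, |fderiv ℝ f x₀ (Pi.single i 1) - θ i| ≤ 4 * Real.sqrt 3 * L * h := by
  intro i
  obtain ⟨e, rfl⟩ : ∃ e, d = e + 1 := ⟨d - 1, (Nat.succ_pred_eq_of_pos hd).symm⟩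
  set a : Fin (e+1) → ℝ := fun j => c j - h / 2 with ha
  set b : Fin (e+1) → ℝ := fun j => c j + h / 2 with hb2
  have hBab : B = Icc a b := hB
  subst hBab
  set D : Fin (e+1) → ℝ := fun j => fderiv ℝ f x₀ (Pi.single j 1) with hD
  set g : (Fin (e+1) → ℝ) → ℝ := fun y => f y - f x₀ - fderiv ℝ f x₀ (y - x₀) with hg
  set K : ℝ := f x₀ - θ₀ + ∑ j, D j * (c j - x₀ j) with hK
  set V2 : ℝ := h^3/12 * h^e with hV2
  have hV2pos : 0 < V2 := by positivity
  -- single coordinate integral vanishes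
  have hM1 : (∫ x in Icc a b, (x i - c i)) = 0 := by
    have hprod : ∀ x : Fin (e+1) → ℝ,
        (x i - c i) = ∏ k, (if k = i then x k - c i else 1) := by
      intro x; rw [Finset.prod_ite_eq' Finset.univ i (fun k => x k - c i)]; simp
    have hfub : (∫ x in Icc a b, (x i - c i))
        = ∏ k, ∫ t in Icc (a k) (b k), (if k = i then t - c i else 1) := by
      rw [← fubini_Icc a b (fun k t => if k = i then t - c i else 1)]
      simp_rw [hprod]
    rw [hfub]
    apply Finset.prod_eq_zero (Finset.mem_univ i)
    simp only [eq_self_iff_true, if_true, ha, hb2]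
    exact icc1d_lin (c i) h hh
  -- pair products
  have hM : ∀ j : Fin (e+1), (∫ x in Icc a b, (x j - c j) * (x i - c i))
      = if j = i then V2 else 0 := by
    intro j
    have hprod : ∀ x : Fin (e+1) → ℝ, (x j - c j) * (x i - c i)
        = ∏ k, ((if k = j then x k - c j else 1) * (if k = i then x k - c i else 1)) := by
      intro x
      rw [Finset.prod_mul_distrib, Finset.prod_ite_eq' Finset.univ j (fun k => x k - c j),
        Finset.prod_ite_eq' Finset.univ i (fun k => x k - c i)]
      simp
    have hfub : (∫ x in Icc a b, (x j - c j) * (x i - c i))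
        = ∏ k, ∫ t in Icc (a k) (b k),
            ((if k = j then t - c j else 1) * (if k = i then t - c i else 1)) := by
      rw [← fubini_Icc a b (fun k t => (if k = j then t - c j else 1) * (if k = i then t - c i else 1))]
      simp_rw [hprod]
    rw [hfub]
    by_cases hji : j = i
    · subst hji
      rw [if_pos rfl]
      have hfac : ∀ k : Fin (e+1),
          (∫ t in Icc (a k) (b k), ((if k = j then t - c j else 1) * (if k = j then t - c j else 1)))
          = if k = j then h^3/12 else h := by
        intro k
        by_cases hk : k = j
        · subst hk
          simp only [eq_self_iff_true, if_true, ha, hb2]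
          have h2 : ∀ t : ℝ, (t - c k) * (t - c k) = (t - c k)^2 := fun t => (sq (t - c k)).symm
          simp_rw [h2]
          exact icc1d_sq (c k) h hh
        · simp only [if_neg hk, one_mul, mul_one, ha, hb2]
          exact icc1d_const (c k) h hh.le
      simp_rw [hfac]
      rw [← Finset.mul_prod_erase Finset.univ _ (Finset.mem_univ j), if_pos rfl]
      rw [Finset.prod_congr rfl (fun k hk => if_neg (Finset.ne_of_mem_erase hk)),
        Finset.prod_const, hV2, Finset.card_erase_of_mem (Finset.mem_univ j),
        Finset.card_univ, Fintype.card_fin]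
      norm_num
    · rw [if_neg hji]
      apply Finset.prod_eq_zero (Finset.mem_univ j)
      simp only [eq_self_iff_true, if_true, if_neg hji, mul_one, ha, hb2]
      exact icc1d_lin (c j) h hh
  -- denominator
  have hden : (∫ x in Icc a b, (x i - c i)^2) = V2 := by
    have := hM i
    rw [if_pos rfl] at this
    rw [← this]
    apply setIntegral_congr_fun measurableSet_Icc
    intro x _; exact sq (x i - c i)
  -- derivative as sum
  have hA : ∀ x : Fin (e+1) → ℝ, fderiv ℝ f x₀ (x - x₀) = ∑ j, (x j - x₀ j) * D j := by
    intro x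
    have h1 := LinearMap.pi_apply_eq_sum_univ
      ((fderiv ℝ f x₀ : (Fin (e+1) → ℝ) →ₗ[ℝ] ℝ)) (x - x₀)
    have h2 : ∀ j : Fin (e+1), (fun k => if j = k then (1:ℝ) else 0) = Pi.single j 1 := by
      intro j; funext k; simp [Pi.single_apply, eq_comm]
    simp only [ContinuousLinearMap.coe_coe, Pi.sub_apply, smul_eq_mul] at h1
    rw [h1]
    exact Finset.sum_congr rfl fun j _ => by rw [h2 j]
  -- pointwise decomposition
  have hpt : ∀ x : Fin (e+1) → ℝ, (f x - θ₀) * (x i - c i)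
      = g x * (x i - c i) + (∑ j, D j * ((x j - c j) * (x i - c i))) + K * (x i - c i) := by
    intro x
    have h3 : f x - θ₀ = g x + (∑ j, D j * (x j - c j)) + K := by
      simp only [hg, hK]
      rw [hA x]
      have hsum : ∑ j, (x j - x₀ j) * D j
          = ∑ j, (D j * (x j - c j) + D j * (c j - x₀ j)) :=
        Finset.sum_congr rfl fun j _ => by ring
      rw [hsum, Finset.sum_add_distrib]
      ring
    rw [h3, add_mul, add_mul, Finset.sum_mul]
    congr 1
    congr 1
    exact Finset.sum_congr rfl fun j _ => by ring
  -- integrability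
  have hcomp : IsCompact (Icc a b) := isCompact_Icc
  have hc_coord : ∀ k : Fin (e+1), Continuous (fun x : Fin (e+1) → ℝ => x k - c k) :=
    fun k => (continuous_apply k).sub continuous_const
  have hcg : Continuous g := by
    rw [hg]
    exact (hdiff.continuous.sub continuous_const).sub
      ((fderiv ℝ f x₀).continuous.comp (continuous_id.sub continuous_const))
  have hint_g : IntegrableOn (fun x => g x * (x i - c i)) (Icc a b) :=
    (hcg.mul (hc_coord i)).continuousOn.integrableOn_compact hcomp
  have hint_jk : ∀ j : Fin (e+1),
      IntegrableOn (fun x => D j * ((x j - c j) * (x i - c i))) (Icc a b) := fun j =>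
    (continuous_const.mul ((hc_coord j).mul (hc_coord i))).continuousOn.integrableOn_compact hcomp
  have hint_S : IntegrableOn (fun x => ∑ j, D j * ((x j - c j) * (x i - c i))) (Icc a b) :=
    integrable_finset_sum _ fun j _ => hint_jk j
  have hint_K : IntegrableOn (fun x => K * (x i - c i)) (Icc a b) :=
    (continuous_const.mul (hc_coord i)).continuousOn.integrableOn_compact hcomp
  -- numerator
  set E : ℝ := ∫ x in Icc a b, g x * (x i - c i) with hE
  have hnum : (∫ x in Icc a b, (f x - θ₀) * (x i - c i)) = E + D i * V2 := by
    have hfun : (fun x : Fin (e+1) → ℝ => (f x - θ₀) * (x i - c i))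
        = fun x => (g x * (x i - c i) + (∑ j, D j * ((x j - c j) * (x i - c i))))
            + K * (x i - c i) := by
      funext x; rw [hpt x]
    have h4 : (∫ x in Icc a b, ((g x * (x i - c i)
          + ∑ j, D j * ((x j - c j) * (x i - c i))) + K * (x i - c i)))
        = (∫ x in Icc a b, (g x * (x i - c i) + ∑ j, D j * ((x j - c j) * (x i - c i))))
          + ∫ x in Icc a b, K * (x i - c i) :=
      integral_add (hint_g.add hint_S) hint_K
    have h5 : (∫ x in Icc a b, (g x * (x i - c i) + ∑ j, D j * ((x j - c j) * (x i - c i))))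
        = E + ∫ x in Icc a b, ∑ j, D j * ((x j - c j) * (x i - c i)) :=
      integral_add hint_g hint_S
    rw [hfun, h4, h5, integral_finset_sum _ (fun j _ => hint_jk j)]
    have hKint : (∫ x in Icc a b, K * (x i - c i)) = 0 := by
      rw [integral_const_mul K _, hM1, mul_zero]
    have hSsum : (∑ j, ∫ x in Icc a b, D j * ((x j - c j) * (x i - c i))) = D i * V2 := by
      have : ∀ j ∈ Finset.univ, (∫ x in Icc a b, D j * ((x j - c j) * (x i - c i)))
          = if j = i then D j * V2 else 0 := by
        intro j _
        rw [integral_const_mul (D j) _, hM j]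
        by_cases hji : j = i
        · rw [if_pos hji, if_pos hji]
        · rw [if_neg hji, if_neg hji, mul_zero]
      rw [Finset.sum_congr rfl this, Finset.sum_ite_eq' Finset.univ i (fun j => D j * V2)]
      simp
    rw [hKint, hSsum, add_zero]
  -- bound on E
  have hvol : volume (Icc a b) < ⊤ := hcomp.measure_lt_top
  have hvolR : (volume (Icc a b)).toReal = h^(e+1) := by
    have hab : a ≤ b := fun j => by simp only [ha, hb2]; linarith
    rw [Real.volume_Icc_pi_toReal hab]
    have : ∀ j : Fin (e+1), b j - a j = h := fun j => by simp only [ha, hb2]; ring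
    rw [Finset.prod_congr rfl (fun j _ => this j), Finset.prod_const, Finset.card_univ,
      Fintype.card_fin]
  have hEbound : |E| ≤ (L * h^2 * (h/2)) * h^(e+1) := by
    rw [hE, ← hvolR, ← Real.norm_eq_abs]
    apply norm_setIntegral_le_of_norm_le_const hvol
    intro x hx
    have hgx : |g x| ≤ L * h^2 := by
      have h1 := hsmooth x hx x₀ hx₀
      have h2 : ‖x - x₀‖ ≤ h := by
        rw [pi_norm_le_iff_of_nonneg hh.le]
        intro j
        have hx1 := hx.1 j
        have hx2 := hx.2 j
        have hy1 := hx₀.1 j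
        have hy2 := hx₀.2 j
        simp only [ha, hb2] at hx1 hx2 hy1 hy2
        rw [Pi.sub_apply, Real.norm_eq_abs, abs_le]
        constructor <;> linarith
      calc |g x| ≤ L * ‖x - x₀‖^2 := h1
        _ ≤ L * h^2 := by
            apply mul_le_mul_of_nonneg_left _ hL.le
            exact pow_le_pow_left₀ (norm_nonneg _) h2 2
    have hxi : |x i - c i| ≤ h/2 := by
      have hx1 := hx.1 i
      have hx2 := hx.2 i
      simp only [ha, hb2] at hx1 hx2
      rw [abs_le]; constructor <;> linarith
    rw [Real.norm_eq_abs, abs_mul]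
    apply mul_le_mul hgx hxi (abs_nonneg _) (by positivity)
  -- conclude
  have hθi : θ i = E / V2 + D i := by
    rw [hθ i, hnum, hden]
    field_simp
  have hfinal : |D i - θ i| ≤ 6 * L * h := by
    rw [hθi]
    have : D i - (E / V2 + D i) = -(E / V2) := by ring
    rw [this, abs_neg, abs_div, abs_of_pos hV2pos, div_le_iff₀ hV2pos]
    calc |E| ≤ (L * h^2 * (h/2)) * h^(e+1) := hEbound
      _ = 6 * L * h * V2 := by rw [hV2, pow_succ]; ring
  refine hfinal.trans ?_
  have hsqrt : (3/2 : ℝ) ≤ Real.sqrt 3 := by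
    have h1 := Real.sq_sqrt (by norm_num : (0:ℝ) ≤ 3)
    nlinarith [Real.sqrt_nonneg 3, h1]
  have h6 := mul_le_mul_of_nonneg_right hsqrt (mul_pos hL hh).le
  nlinarith [h6]
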